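/- For any four real matrices B, C, D, F of compatible dimensions, the nuclear norm of the block matrix [[B, C], [D, F]] is at least ‖B‖_* + ‖F‖_*, and it is at least ‖B‖_*, with equality in the latter if and only if C = 0, D = 0, and F = 0. -/

import Mathlib

open Matrix

set_option linter.unusedSectionVars false
set_option linter.unusedVariables false
set_option maxHeartbeats 1600000

/-- The nuclear norm of a real matrix: the sum of its singular values,
i.e. the sum of the square roots of the eigenvalues of `Aᵀ * A`. -/
noncomputable def nuclearNorm {m n : Type*} [Fintype m] [Fintype n] [DecidableEq n]
    (A : Matrix m n ℝ) : ℝ :=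
  ∑ i, Real.sqrt ((show (Aᵀ * A).IsHermitian by
    simpa only [Matrix.conjTranspose_eq_transpose_of_trivial] using
      Matrix.isHermitian_conjTranspose_mul_self A).eigenvalues i)

/-- `P` is the Moore–Penrose pseudo-inverse of `X`. -/
def IsMoorePenroseInv {m n : Type*} [Fintype m] [Fintype n]
    (X : Matrix m n ℝ) (P : Matrix n m ℝ) : Prop :=
  X * P * X = X ∧ P * X * P = P ∧ (X * P)ᵀ = X * P ∧ (P * X)ᵀ = P * X

/-- `(U, σ, V)` is a skinny SVD of `X`: `U` and `V` have orthonormal columns,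
`σ` lists the (positive) nonzero singular values, `X = U * diagonal σ * Vᵀ`,
and the number of columns of `U` and `V` is `rank X`. -/
def IsSkinnySVD {m n r : ℕ} (X : Matrix (Fin m) (Fin n) ℝ)
    (U : Matrix (Fin m) (Fin r) ℝ) (σ : Fin r → ℝ) (V : Matrix (Fin n) (Fin r) ℝ) : Prop :=
  Uᵀ * U = 1 ∧ Vᵀ * V = 1 ∧ (∀ i, 0 < σ i) ∧
    X = U * Matrix.diagonal σ * Vᵀ ∧ r = X.rank

theorem Matrix.isHermitian_transpose_mul_self {m n : Type*} [Fintype m]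
    (A : Matrix m n ℝ) : (Aᵀ * A).IsHermitian := by
  simpa only [Matrix.conjTranspose_eq_transpose_of_trivial] using
    Matrix.isHermitian_conjTranspose_mul_self A

namespace NuclearAux

variable {m n : Type*} [Fintype m] [Fintype n]

lemma quad_transpose_mul (W : Matrix m n ℝ) (x : n → ℝ) :
    x ⬝ᵥ (Wᵀ * W) *ᵥ x = (W *ᵥ x) ⬝ᵥ (W *ᵥ x) := by
  rw [← mulVec_mulVec, dotProduct_mulVec, vecMul_transpose]

lemma psd_quad {M : Matrix n n ℝ} (h : M.PosSemidef) (x : n → ℝ) :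
    0 ≤ x ⬝ᵥ M *ᵥ x := by simpa using h.dotProduct_mulVec_nonneg x

lemma psd_of_quad {M : Matrix n n ℝ} (h1 : M.IsHermitian) (h2 : ∀ x : n → ℝ, 0 ≤ x ⬝ᵥ M *ᵥ x) :
    M.PosSemidef := Matrix.PosSemidef.of_dotProduct_mulVec_nonneg h1 (fun x => by simpa using h2 x)

lemma sym_of_transpose {M : Matrix n n ℝ} (h : Mᵀ = M) : M.IsHermitian := h

lemma dot_CS (x y : n → ℝ) : (x ⬝ᵥ y) ^ 2 ≤ (x ⬝ᵥ x) * (y ⬝ᵥ y) := by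
  simpa [dotProduct, pow_two, mul_assoc, mul_comm, mul_left_comm] using
    Finset.sum_mul_sq_le_sq_mul_sq Finset.univ x y

lemma dot_self_nonneg (x : n → ℝ) : 0 ≤ x ⬝ᵥ x :=
  Finset.sum_nonneg fun i _ => mul_self_nonneg _

lemma sym_one_sub_tm (W : Matrix m n ℝ) [DecidableEq n] : (1 - Wᵀ * W).IsHermitian := by
  refine sym_of_transpose ?_
  simp [transpose_sub, transpose_mul]

/-- If `1 - W Wᵀ` is PSD then `1 - Wᵀ W` is PSD. -/
lemma contraction_transfer {W : Matrix m n ℝ} [DecidableEq m] [DecidableEq n]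
    (h : (1 - W * Wᵀ).PosSemidef) : (1 - Wᵀ * W).PosSemidef := by
  refine psd_of_quad (sym_one_sub_tm W) (fun x => ?_)
  set y := W *ᵥ x with hy
  have hq : x ⬝ᵥ (1 - Wᵀ * W) *ᵥ x = x ⬝ᵥ x - y ⬝ᵥ y := by
    rw [sub_mulVec, dotProduct_sub, one_mulVec, quad_transpose_mul]
  rw [hq]
  have hWWt : y ⬝ᵥ (W * Wᵀ) *ᵥ y ≤ y ⬝ᵥ y := by
    have := psd_quad h y
    have hq2 : y ⬝ᵥ (1 - W * Wᵀ) *ᵥ y = y ⬝ᵥ y - y ⬝ᵥ (W * Wᵀ) *ᵥ y := by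
      rw [sub_mulVec, dotProduct_sub, one_mulVec]
    linarith [hq2 ▸ this]
  have key : (y ⬝ᵥ y) ^ 2 ≤ (x ⬝ᵥ x) * (y ⬝ᵥ y) := by
    have h1 : x ⬝ᵥ (Wᵀ *ᵥ y) = y ⬝ᵥ y := by
      rw [mulVec_transpose, dotProduct_comm, ← dotProduct_mulVec, hy]
    have h2 := dot_CS x (Wᵀ *ᵥ y)
    have h3 : (Wᵀ *ᵥ y) ⬝ᵥ (Wᵀ *ᵥ y) = y ⬝ᵥ (W * Wᵀ) *ᵥ y := by
      rw [← quad_transpose_mul Wᵀ y, transpose_transpose]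
    calc (y ⬝ᵥ y) ^ 2 = (x ⬝ᵥ (Wᵀ *ᵥ y)) ^ 2 := by rw [h1]
      _ ≤ (x ⬝ᵥ x) * ((Wᵀ *ᵥ y) ⬝ᵥ (Wᵀ *ᵥ y)) := h2
      _ = (x ⬝ᵥ x) * (y ⬝ᵥ (W * Wᵀ) *ᵥ y) := by rw [h3]
      _ ≤ (x ⬝ᵥ x) * (y ⬝ᵥ y) := by
          have := dot_self_nonneg x
          nlinarith [hWWt]
  rcases eq_or_lt_of_le (dot_self_nonneg y) with h0 | h0
  · have := dot_self_nonneg x; rw [← h0]; linarith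
  · nlinarith [key]

lemma psd_diag {M : Matrix n n ℝ} [DecidableEq n] (h : M.PosSemidef) (i : n) : 0 ≤ M i i := by
  have := psd_quad h (Pi.single i 1)
  simpa [mulVec_single, dotProduct, Pi.single_apply] using this

lemma spec_decomp [DecidableEq n] (A : Matrix m n ℝ) :
    ∃ V : Matrix n n ℝ, Vᵀ * V = 1 ∧ V * Vᵀ = 1 ∧
      Aᵀ * A = V * diagonal ((Matrix.isHermitian_transpose_mul_self A).eigenvalues) * Vᵀ := by
  set hA := Matrix.isHermitian_transpose_mul_self A with hhA
  refine ⟨(hA.eigenvectorUnitary : Matrix n n ℝ), ?_, ?_, ?_⟩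
  · exact (Matrix.mem_unitaryGroup_iff').mp hA.eigenvectorUnitary.2
  · exact (Matrix.mem_unitaryGroup_iff).mp hA.eigenvectorUnitary.2
  · exact hA.spectral_theorem

lemma trace_le_nuclearNorm [DecidableEq n] (A W : Matrix m n ℝ)
    (hW : (1 - Wᵀ * W).PosSemidef) : trace (Aᵀ * W) ≤ nuclearNorm A := by
  obtain ⟨V, hV1, hV2, hspec⟩ := spec_decomp A
  set lam := (Matrix.isHermitian_transpose_mul_self A).eigenvalues with hlam
  have hlamnn : ∀ i, 0 ≤ lam i := Matrix.eigenvalues_conjTranspose_mul_self_nonneg A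
  have htr : trace (Aᵀ * W) = trace ((A * V)ᵀ * (W * V)) := by
    have : (A * V)ᵀ * (W * V) = Vᵀ * (Aᵀ * W) * V := by
      rw [transpose_mul]; rw [Matrix.mul_assoc, Matrix.mul_assoc, Matrix.mul_assoc]
    rw [this, trace_mul_cycle, ← Matrix.mul_assoc, hV2, Matrix.one_mul]
  have hgram : (A * V)ᵀ * (A * V) = diagonal lam := by
    have e1 : (A * V)ᵀ * (A * V) = Vᵀ * (Aᵀ * A) * V := by
      rw [transpose_mul, Matrix.mul_assoc, Matrix.mul_assoc, Matrix.mul_assoc]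
    rw [e1, hspec]
    calc Vᵀ * (V * diagonal lam * Vᵀ) * V
        = (Vᵀ * V) * diagonal lam * (Vᵀ * V) := by
          simp only [Matrix.mul_assoc]
      _ = diagonal lam := by rw [hV1, Matrix.one_mul, Matrix.mul_one]
  have hWV : ∀ i, ((W * V)ᵀ * (W * V)) i i ≤ 1 := by
    intro i
    have e1 : (W * V)ᵀ * (W * V) = Vᵀ * (Wᵀ * W) * V := by
      rw [transpose_mul, Matrix.mul_assoc, Matrix.mul_assoc, Matrix.mul_assoc]
    have e2 : (1 : Matrix n n ℝ) - (W * V)ᵀ * (W * V) = Vᵀ * (1 - Wᵀ * W) * V := by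
      rw [Matrix.mul_sub, Matrix.sub_mul, e1, Matrix.mul_one, hV1]
    have hpsd : ((1 : Matrix n n ℝ) - (W * V)ᵀ * (W * V)).PosSemidef := by
      rw [e2]; exact hW.conjTranspose_mul_mul_same V
    have := psd_diag hpsd i
    have h1 : ((1 : Matrix n n ℝ) - (W * V)ᵀ * (W * V)) i i
        = 1 - ((W * V)ᵀ * (W * V)) i i := by simp [Matrix.sub_apply]
    linarith [h1 ▸ this]
  rw [htr]
  have hterm : ∀ i, ((A * V)ᵀ * (W * V)) i i ≤ Real.sqrt (lam i) := by
    intro i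
    have hsq : (((A * V)ᵀ * (W * V)) i i) ^ 2 ≤ lam i := by
      have e : ((A * V)ᵀ * (W * V)) i i = ∑ k, (A * V) k i * (W * V) k i := by
        simp [mul_apply, transpose_apply, mul_comm]
      have cs := Finset.sum_mul_sq_le_sq_mul_sq Finset.univ
        (fun k => (A * V) k i) (fun k => (W * V) k i)
      have ea : ∑ k, (A * V) k i ^ 2 = lam i := by
        have : ((A * V)ᵀ * (A * V)) i i = lam i := by rw [hgram]; simp
        rw [← this]; simp [mul_apply, transpose_apply, pow_two, mul_comm]
      have ew : ∑ k, (W * V) k i ^ 2 ≤ 1 := by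
        have : ((W * V)ᵀ * (W * V)) i i = ∑ k, (W * V) k i ^ 2 := by
          simp [mul_apply, transpose_apply, pow_two, mul_comm]
        linarith [hWV i, this ▸ (hWV i)]
      have ewnn : (0:ℝ) ≤ ∑ k, (W * V) k i ^ 2 :=
        Finset.sum_nonneg fun k _ => sq_nonneg _
      rw [e]
      calc (∑ k, (A * V) k i * (W * V) k i) ^ 2
          ≤ (∑ k, (A * V) k i ^ 2) * (∑ k, (W * V) k i ^ 2) := cs
        _ ≤ lam i * 1 := by
            rw [ea]
            exact mul_le_mul_of_nonneg_left ew (hlamnn i) |>.trans (le_of_eq rfl)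
        _ = lam i := mul_one _
    have := Real.sqrt_le_sqrt hsq
    rw [Real.sqrt_sq_eq_abs] at this
    exact (le_abs_self _).trans this
  calc trace ((A * V)ᵀ * (W * V)) = ∑ i, ((A * V)ᵀ * (W * V)) i i := rfl
    _ ≤ ∑ i, Real.sqrt (lam i) := Finset.sum_le_sum fun i _ => hterm i
    _ = nuclearNorm A := rfl

/-- Dual witness: `W` with `WᵀW ⪯ 1` and `tr(AᵀW) = ‖A‖_*`. -/
lemma exists_dual [DecidableEq n] (A : Matrix m n ℝ) :
    ∃ W : Matrix m n ℝ, (1 - Wᵀ * W).PosSemidef ∧ trace (Aᵀ * W) = nuclearNorm A := by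
  obtain ⟨V, hV1, hV2, hspec⟩ := spec_decomp A
  set lam := (Matrix.isHermitian_transpose_mul_self A).eigenvalues with hlam
  have hlamnn : ∀ i, 0 ≤ lam i := Matrix.eigenvalues_conjTranspose_mul_self_nonneg A
  set g : n → ℝ := fun i => (Real.sqrt (lam i))⁻¹ with hg
  refine ⟨A * (V * diagonal g * Vᵀ), ?_, ?_⟩
  · have hWtW : (A * (V * diagonal g * Vᵀ))ᵀ * (A * (V * diagonal g * Vᵀ))
        = V * diagonal (fun i => g i * lam i * g i) * Vᵀ := by
      have e1 : (A * (V * diagonal g * Vᵀ))ᵀ * (A * (V * diagonal g * Vᵀ))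
          = (V * diagonal g * Vᵀ)ᵀ * (Aᵀ * A) * (V * diagonal g * Vᵀ) := by
        rw [transpose_mul]; simp only [Matrix.mul_assoc]
      rw [e1, hspec]
      have hdgt : (V * diagonal g * Vᵀ)ᵀ = V * diagonal g * Vᵀ := by
        simp [transpose_mul, diagonal_transpose, Matrix.mul_assoc]
      rw [hdgt]
      calc V * diagonal g * Vᵀ * (V * diagonal lam * Vᵀ) * (V * diagonal g * Vᵀ)
          = V * (diagonal g * (Vᵀ * V) * diagonal lam * (Vᵀ * V) * diagonal g) * Vᵀ := by
            simp only [Matrix.mul_assoc]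
        _ = V * (diagonal g * diagonal lam * diagonal g) * Vᵀ := by
            rw [hV1]; simp only [Matrix.mul_one, Matrix.one_mul]
        _ = V * diagonal (fun i => g i * lam i * g i) * Vᵀ := by
            rw [diagonal_mul_diagonal, diagonal_mul_diagonal]
    rw [hWtW]
    have hone : (1 : Matrix n n ℝ) = V * diagonal (fun _ => (1:ℝ)) * Vᵀ := by
      rw [diagonal_one, Matrix.mul_one, hV2]
    rw [hone, ← Matrix.sub_mul, ← Matrix.mul_sub, diagonal_sub]
    have hdiagpsd : (diagonal (fun i => (1:ℝ) - g i * lam i * g i)).PosSemidef := by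
      refine Matrix.PosSemidef.diagonal (fun i => ?_)
      rcases eq_or_lt_of_le (hlamnn i) with h0 | h0
      · simp [hg, ← h0]
      · have hs : Real.sqrt (lam i) ≠ 0 := ne_of_gt (Real.sqrt_pos.mpr h0)
        have hss : Real.sqrt (lam i) * Real.sqrt (lam i) = lam i :=
          Real.mul_self_sqrt (le_of_lt h0)
        have : g i * lam i * g i = 1 := by
          rw [← hss, hg]
          field_simp
        simp [this]
    have := hdiagpsd.mul_mul_conjTranspose_same V
    simpa using this
  · have hAtW : Aᵀ * (A * (V * diagonal g * Vᵀ)) = V * diagonal (fun i => lam i * g i) * Vᵀ := by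
      rw [← Matrix.mul_assoc, hspec]
      calc V * diagonal lam * Vᵀ * (V * diagonal g * Vᵀ)
          = V * (diagonal lam * (Vᵀ * V) * diagonal g) * Vᵀ := by simp only [Matrix.mul_assoc]
        _ = V * (diagonal lam * diagonal g) * Vᵀ := by
            rw [hV1]; simp only [Matrix.mul_one, Matrix.one_mul]
        _ = V * diagonal (fun i => lam i * g i) * Vᵀ := by rw [diagonal_mul_diagonal]
    rw [hAtW, trace_mul_cycle, hV1, Matrix.one_mul, trace_diagonal]
    refine Finset.sum_congr rfl (fun i _ => ?_)
    rcases eq_or_lt_of_le (hlamnn i) with h0 | h0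
    · rw [← hlam, ← h0]; simp
    · have hs : Real.sqrt (lam i) ≠ 0 := ne_of_gt (Real.sqrt_pos.mpr h0)
      have hss : Real.sqrt (lam i) * Real.sqrt (lam i) = lam i :=
        Real.mul_self_sqrt (le_of_lt h0)
      rw [← hss, hg]
      field_simp
      rfl

lemma nuclearNorm_nonneg [DecidableEq n] (A : Matrix m n ℝ) : 0 ≤ nuclearNorm A := by
  unfold nuclearNorm; exact Finset.sum_nonneg fun i _ => Real.sqrt_nonneg _

lemma eq_zero_of_nuclearNorm_eq_zero [DecidableEq n] {A : Matrix m n ℝ}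
    (h : nuclearNorm A = 0) : A = 0 := by
  set lam := (Matrix.isHermitian_transpose_mul_self A).eigenvalues with hlam
  have hlamnn : ∀ i, 0 ≤ lam i := Matrix.eigenvalues_conjTranspose_mul_self_nonneg A
  have hz : ∀ i, lam i = 0 := by
    intro i
    have hall := (Finset.sum_eq_zero_iff_of_nonneg
      (fun i _ => Real.sqrt_nonneg (lam i))).mp h i (Finset.mem_univ i)
    have h' : lam i ≤ 0 := Real.sqrt_eq_zero'.mp hall
    exact le_antisymm h' (hlamnn i)
  obtain ⟨V, hV1, hV2, hspec⟩ := spec_decomp A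
  have htr : trace (Aᵀ * A) = 0 := by
    rw [hspec, trace_mul_cycle, hV1, Matrix.one_mul, trace_diagonal]
    exact Finset.sum_eq_zero fun i _ => hz i
  have hsum : ∑ j, ∑ i, A i j ^ 2 = 0 := by
    rw [← htr]
    simp [trace, mul_apply, diag, transpose_apply, pow_two]
  ext i j
  have hjz := (Finset.sum_eq_zero_iff_of_nonneg
    (fun j _ => Finset.sum_nonneg fun i _ => sq_nonneg (A i j))).mp hsum j (Finset.mem_univ j)
  have hiz := (Finset.sum_eq_zero_iff_of_nonneg
    (fun i _ => sq_nonneg (A i j))).mp hjz i (Finset.mem_univ i)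
  simpa using pow_eq_zero_iff (n := 2) (by norm_num) |>.mp hiz

/-- `A * Aᵀ ⪯ (∑ A_{ij}²) • 1` -/
lemma self_mul_transpose_le [DecidableEq m] (A : Matrix m n ℝ) :
    ((∑ i, ∑ j, A i j ^ 2) • (1 : Matrix m m ℝ) - A * Aᵀ).PosSemidef := by
  refine psd_of_quad ?_ ?_
  · refine sym_of_transpose ?_
    rw [transpose_sub, transpose_smul, transpose_one, transpose_mul, transpose_transpose]
  · intro x
    rw [sub_mulVec, dotProduct_sub, smul_mulVec, one_mulVec, dotProduct_smul]
    have key : x ⬝ᵥ (A * Aᵀ) *ᵥ x ≤ (∑ i, ∑ j, A i j ^ 2) * (x ⬝ᵥ x) := by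
      have e0 : x ⬝ᵥ (A * Aᵀ) *ᵥ x = (Aᵀ *ᵥ x) ⬝ᵥ (Aᵀ *ᵥ x) := by
        have := quad_transpose_mul Aᵀ x
        rwa [transpose_transpose] at this
      have e : x ⬝ᵥ (A * Aᵀ) *ᵥ x = ∑ j, (∑ i, A i j * x i) ^ 2 := by
        rw [e0]
        simp only [dotProduct, mulVec, transpose_apply, pow_two]
      rw [e]
      have hb : ∀ j, (∑ i, A i j * x i) ^ 2 ≤ (∑ i, A i j ^ 2) * (x ⬝ᵥ x) := by
        intro j
        have := Finset.sum_mul_sq_le_sq_mul_sq Finset.univ (fun i => A i j) x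
        simpa [dotProduct, pow_two, mul_comm, mul_left_comm] using this
      calc ∑ j, (∑ i, A i j * x i) ^ 2 ≤ ∑ j, (∑ i, A i j ^ 2) * (x ⬝ᵥ x) :=
            Finset.sum_le_sum fun j _ => hb j
        _ = (∑ j, ∑ i, A i j ^ 2) * (x ⬝ᵥ x) := by rw [Finset.sum_mul]
        _ = (∑ i, ∑ j, A i j ^ 2) * (x ⬝ᵥ x) := by rw [Finset.sum_comm]
    rw [smul_eq_mul]
    linarith

lemma trace_transpose_mul_self (A : Matrix m n ℝ) :
    trace (Aᵀ * A) = ∑ i, ∑ j, A i j ^ 2 := by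
  rw [Finset.sum_comm]
  simp [trace, mul_apply, diag, transpose_apply, pow_two]

lemma sum_sq_pos_of_ne_zero {A : Matrix m n ℝ} (h : A ≠ 0) : 0 < ∑ i, ∑ j, A i j ^ 2 := by
  rcases lt_or_eq_of_le (Finset.sum_nonneg
    (fun i _ => Finset.sum_nonneg fun j _ => sq_nonneg (A i j))) with h' | h'
  · exact h'
  · exfalso
    apply h
    ext i j
    have hjz := (Finset.sum_eq_zero_iff_of_nonneg
      (fun i _ => Finset.sum_nonneg fun j _ => sq_nonneg (A i j))).mp h'.symm i (Finset.mem_univ i)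
    have hiz := (Finset.sum_eq_zero_iff_of_nonneg
      (fun j _ => sq_nonneg (A i j))).mp hjz j (Finset.mem_univ j)
    simpa using pow_eq_zero_iff (n := 2) (by norm_num) |>.mp hiz

lemma trace_fromBlocks {m' n' : Type*} [Fintype m'] [Fintype n']
    (A : Matrix m' m' ℝ) (B : Matrix m' n' ℝ) (C : Matrix n' m' ℝ)
    (D : Matrix n' n' ℝ) : trace (fromBlocks A B C D) = trace A + trace D := by
  simp [trace, Fintype.sum_sum_type, fromBlocks]

lemma psd_fromBlocks_diag {M : Matrix m m ℝ} {N : Matrix n n ℝ}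
    (hM : M.PosSemidef) (hN : N.PosSemidef) :
    (fromBlocks M 0 0 N : Matrix (m ⊕ n) (m ⊕ n) ℝ).PosSemidef := by
  refine psd_of_quad ?_ ?_
  · refine sym_of_transpose ?_
    rw [fromBlocks_transpose]
    rw [show Mᵀ = M from hM.1, show Nᵀ = N from hN.1]
    simp
  · intro x
    rw [fromBlocks_mulVec]
    have hx : x = Sum.elim (x ∘ Sum.inl) (x ∘ Sum.inr) := by
      ext i; cases i <;> rfl
    rw [hx, sumElim_dotProduct_sumElim]
    simp only [zero_mulVec, add_zero, zero_add]
    exact add_nonneg (psd_quad hM _) (psd_quad hN _)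

lemma psd_toBlocks₁₁ {M : Matrix (m ⊕ n) (m ⊕ n) ℝ} (h : M.PosSemidef) :
    (M.toBlocks₁₁).PosSemidef := by
  refine psd_of_quad ?_ ?_
  · refine sym_of_transpose ?_
    ext i j
    have := congrFun (congrFun h.1 (Sum.inl i)) (Sum.inl j)
    simpa [toBlocks₁₁, conjTranspose_apply] using this
  · intro x
    have hq := psd_quad h (Sum.elim x 0)
    have e : Sum.elim x (0 : n → ℝ) ⬝ᵥ M *ᵥ Sum.elim x 0 = x ⬝ᵥ M.toBlocks₁₁ *ᵥ x := by
      have hM : M = fromBlocks M.toBlocks₁₁ M.toBlocks₁₂ M.toBlocks₂₁ M.toBlocks₂₂ :=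
        (fromBlocks_toBlocks M).symm
      rw [hM, fromBlocks_mulVec]
      simp only [Sum.elim_comp_inl, Sum.elim_comp_inr, mulVec_zero, add_zero,
        sumElim_dotProduct_sumElim, zero_dotProduct, Matrix.mulVec_zero]
      simp
    rw [← e]; exact hq

lemma fromBlocks_sub {l o l' o' : Type*} (A A' : Matrix l l' ℝ) (B B' : Matrix l o' ℝ)
    (C C' : Matrix o l' ℝ) (D D' : Matrix o o' ℝ) :
    fromBlocks A B C D - fromBlocks A' B' C' D'
      = fromBlocks (A - A') (B - B') (C - C') (D - D') := by
  ext i j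
  rcases i with i | i <;> rcases j with j | j <;> simp [fromBlocks]

end NuclearAux

open NuclearAux

/-- Nuclear norm of a block matrix dominates the sum of the nuclear norms of the
diagonal blocks, and dominates the nuclear norm of the top-left block, with
equality in the latter iff the other three blocks vanish. -/
theorem stmt8 {m₁ m₂ n₁ n₂ : ℕ}
    (B : Matrix (Fin m₁) (Fin n₁) ℝ) (C : Matrix (Fin m₁) (Fin n₂) ℝ)
    (D : Matrix (Fin m₂) (Fin n₁) ℝ) (F : Matrix (Fin m₂) (Fin n₂) ℝ) :
    nuclearNorm B + nuclearNorm F ≤ nuclearNorm (Matrix.fromBlocks B C D F) ∧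
    nuclearNorm B ≤ nuclearNorm (Matrix.fromBlocks B C D F) ∧
    (nuclearNorm (Matrix.fromBlocks B C D F) = nuclearNorm B ↔
      C = 0 ∧ D = 0 ∧ F = 0) := by
  classical
  -- the two diagonal-block inequalities, for arbitrary blocks
  have part1 : ∀ (C' : Matrix (Fin m₁) (Fin n₂) ℝ) (D' : Matrix (Fin m₂) (Fin n₁) ℝ),
      nuclearNorm B + nuclearNorm F ≤ nuclearNorm (Matrix.fromBlocks B C' D' F) := by
    intro C' D'
    obtain ⟨WB, hWB, hWBtr⟩ := exists_dual B
    obtain ⟨WF, hWF, hWFtr⟩ := exists_dual F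
    set W : Matrix (Fin m₁ ⊕ Fin m₂) (Fin n₁ ⊕ Fin n₂) ℝ := fromBlocks WB 0 0 WF with hWdef
    have hW : (1 - Wᵀ * W).PosSemidef := by
      rw [hWdef, fromBlocks_transpose, fromBlocks_multiply]
      simp only [Matrix.mul_zero, Matrix.zero_mul, add_zero, zero_add, transpose_zero,
        Matrix.zero_mul]
      rw [← fromBlocks_one, fromBlocks_sub]
      simp only [sub_zero]
      exact psd_fromBlocks_diag hWB hWF
    have htr : trace ((Matrix.fromBlocks B C' D' F)ᵀ * W)
        = nuclearNorm B + nuclearNorm F := by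
      rw [hWdef, fromBlocks_transpose, fromBlocks_multiply]
      simp only [Matrix.mul_zero, Matrix.zero_mul, add_zero, zero_add]
      rw [trace_fromBlocks, hWBtr, hWFtr]
    calc nuclearNorm B + nuclearNorm F = trace ((Matrix.fromBlocks B C' D' F)ᵀ * W) := htr.symm
      _ ≤ nuclearNorm (Matrix.fromBlocks B C' D' F) :=
          trace_le_nuclearNorm (Matrix.fromBlocks B C' D' F) W hW
  have part2 : ∀ (C' : Matrix (Fin m₁) (Fin n₂) ℝ) (D' : Matrix (Fin m₂) (Fin n₁) ℝ)
      (F' : Matrix (Fin m₂) (Fin n₂) ℝ),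
      nuclearNorm B ≤ nuclearNorm (Matrix.fromBlocks B C' D' F') := by
    intro C' D' F'
    obtain ⟨WB, hWB, hWBtr⟩ := exists_dual B
    set W : Matrix (Fin m₁ ⊕ Fin m₂) (Fin n₁ ⊕ Fin n₂) ℝ := fromBlocks WB 0 0 0 with hWdef
    have hW : (1 - Wᵀ * W).PosSemidef := by
      rw [hWdef, fromBlocks_transpose, fromBlocks_multiply]
      simp only [Matrix.mul_zero, Matrix.zero_mul, add_zero, zero_add, transpose_zero]
      rw [← fromBlocks_one, fromBlocks_sub]
      simp only [sub_zero]
      exact psd_fromBlocks_diag hWB (by simpa using Matrix.PosSemidef.one (n := Fin n₂) (R := ℝ))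
    have htr : trace ((Matrix.fromBlocks B C' D' F')ᵀ * W) = nuclearNorm B := by
      rw [hWdef, fromBlocks_transpose, fromBlocks_multiply]
      simp only [Matrix.mul_zero, Matrix.zero_mul, add_zero, zero_add]
      rw [trace_fromBlocks, hWBtr, trace_zero, add_zero]
    calc nuclearNorm B = trace ((Matrix.fromBlocks B C' D' F')ᵀ * W) := htr.symm
      _ ≤ nuclearNorm (Matrix.fromBlocks B C' D' F') := trace_le_nuclearNorm _ W hW
  refine ⟨part1 C D, part2 C D F, ?_, ?_⟩
  · -- forward direction
    intro hEq
    have hNB := nuclearNorm_nonneg B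
    have hF : F = 0 := by
      have h1 := part1 C D
      rw [hEq] at h1
      have h2 : nuclearNorm F ≤ 0 := by linarith
      exact eq_zero_of_nuclearNorm_eq_zero (le_antisymm h2 (nuclearNorm_nonneg F))
    obtain ⟨W₀, hW₀, htr₀⟩ := exists_dual B
    have hW₀' : (1 - W₀ * W₀ᵀ).PosSemidef := by
      have h := contraction_transfer (W := W₀ᵀ)
        (by rwa [transpose_transpose])
      rwa [transpose_transpose] at h
    have hD : D = 0 := by
      by_contra hD0
      set τ := ∑ i, ∑ j, D i j ^ 2 with hτdef
      have hτpos : 0 < τ := sum_sq_pos_of_ne_zero hD0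
      have hsτ : Real.sqrt τ ≠ 0 := ne_of_gt (Real.sqrt_pos.mpr hτpos)
      have hss2 : Real.sqrt τ * Real.sqrt τ = τ := Real.mul_self_sqrt hτpos.le
      set t := (Real.sqrt τ)⁻¹ with htdef
      have htpos : 0 < t := inv_pos.mpr (Real.sqrt_pos.mpr hτpos)
      have ht2 : t * t * τ = 1 := by rw [← hss2, htdef]; field_simp
      set s := min (1/2 : ℝ) ((t*τ) / (2*(nuclearNorm B + 1))) with hsdef
      have hs0 : 0 < s :=
        lt_min (by norm_num) (div_pos (mul_pos htpos hτpos) (by linarith))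
      have hshalf : s ≤ 1/2 := min_le_left _ _
      set c := Real.sqrt (1 - s*s) with hcdef
      have hc0 : 0 ≤ c := Real.sqrt_nonneg _
      have hc2 : c * c = 1 - s * s := Real.mul_self_sqrt (by nlinarith)
      have hc1 : c ≤ 1 := by nlinarith
      have h1c : 1 - c ≤ s * s := by nlinarith
      set W : Matrix (Fin m₁ ⊕ Fin m₂) (Fin n₁ ⊕ Fin n₂) ℝ :=
        fromBlocks (c • W₀) 0 ((s*t) • D) 0 with hWdef
      have hWtW : Wᵀ * W
          = fromBlocks ((c*c) • (W₀ᵀ * W₀) + ((s*t)*(s*t)) • (Dᵀ * D)) 0 0 0 := by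
        rw [hWdef, fromBlocks_transpose, fromBlocks_multiply]
        simp only [transpose_smul, Matrix.smul_mul, Matrix.mul_smul, smul_smul,
          Matrix.mul_zero, Matrix.zero_mul, add_zero, zero_add, transpose_zero, smul_zero]
      have hG : ((1 : Matrix (Fin n₁) (Fin n₁) ℝ)
          - (c*c) • (W₀ᵀ * W₀) - ((s*t)*(s*t)) • (Dᵀ * D)).PosSemidef := by
        refine psd_of_quad ?_ ?_
        · refine sym_of_transpose ?_
          rw [transpose_sub, transpose_sub, transpose_smul, transpose_smul, transpose_one,
            transpose_mul, transpose_mul, transpose_transpose, transpose_transpose]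
        · intro x
          have q1 : x ⬝ᵥ (W₀ᵀ * W₀) *ᵥ x ≤ x ⬝ᵥ x := by
            have h := psd_quad hW₀ x
            rw [sub_mulVec, dotProduct_sub, one_mulVec] at h
            linarith
          have q1n : 0 ≤ x ⬝ᵥ (W₀ᵀ * W₀) *ᵥ x := by
            rw [quad_transpose_mul]; exact dot_self_nonneg _
          have q2 : x ⬝ᵥ (Dᵀ * D) *ᵥ x ≤ τ * (x ⬝ᵥ x) := by
            have hps := self_mul_transpose_le Dᵀ
            rw [transpose_transpose] at hps
            have heτ : ∑ i, ∑ j, Dᵀ i j ^ 2 = τ := by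
              simp only [transpose_apply]
              rw [Finset.sum_comm]
            rw [heτ] at hps
            have h := psd_quad hps x
            rw [sub_mulVec, dotProduct_sub, smul_mulVec, one_mulVec,
              dotProduct_smul, smul_eq_mul] at h
            linarith
          have q2n : 0 ≤ x ⬝ᵥ (Dᵀ * D) *ᵥ x := by
            rw [quad_transpose_mul]; exact dot_self_nonneg _
          have hxx : 0 ≤ x ⬝ᵥ x := dot_self_nonneg x
          rw [sub_mulVec, sub_mulVec, dotProduct_sub, dotProduct_sub, one_mulVec,
            smul_mulVec, smul_mulVec, dotProduct_smul, dotProduct_smul,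
            smul_eq_mul, smul_eq_mul]
          have e1 : (c*c) * (x ⬝ᵥ (W₀ᵀ * W₀) *ᵥ x) ≤ (c*c) * (x ⬝ᵥ x) :=
            mul_le_mul_of_nonneg_left q1 (mul_self_nonneg c)
          have e2 : ((s*t)*(s*t)) * (x ⬝ᵥ (Dᵀ * D) *ᵥ x)
              ≤ ((s*t)*(s*t)) * (τ * (x ⬝ᵥ x)) :=
            mul_le_mul_of_nonneg_left q2 (mul_self_nonneg (s*t))
          have e3 : ((s*t)*(s*t)) * (τ * (x ⬝ᵥ x)) = (s*s) * (x ⬝ᵥ x) := by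
            have : ((s*t)*(s*t)) * (τ * (x ⬝ᵥ x)) = (s*s) * ((t*t*τ) * (x ⬝ᵥ x)) := by ring
            rw [this, ht2, one_mul]
          nlinarith [e1, e2, e3, hc2, hxx]
      have hW : (1 - Wᵀ * W).PosSemidef := by
        rw [hWtW, ← fromBlocks_one, fromBlocks_sub]
        simp only [sub_zero]
        rw [sub_add_eq_sub_sub]
        exact psd_fromBlocks_diag hG Matrix.PosSemidef.one
      have htrW : trace ((Matrix.fromBlocks B C D F)ᵀ * W)
          = c * nuclearNorm B + (s*t) * τ := by
        rw [hWdef, fromBlocks_transpose, fromBlocks_multiply]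
        simp only [Matrix.mul_zero, Matrix.zero_mul, add_zero, zero_add, Matrix.mul_smul]
        rw [trace_fromBlocks, trace_add, trace_smul, trace_smul, htr₀,
          trace_transpose_mul_self, trace_zero, add_zero]
        simp [smul_eq_mul]
        exact Or.inl rfl
      have hle := trace_le_nuclearNorm (Matrix.fromBlocks B C D F) W hW
      rw [htrW, hEq] at hle
      have hkey : t * τ ≤ s * nuclearNorm B := by
        have h1 : s * (t * τ) ≤ (1 - c) * nuclearNorm B := by nlinarith
        have h2 : (1 - c) * nuclearNorm B ≤ (s*s) * nuclearNorm B :=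
          mul_le_mul_of_nonneg_right h1c hNB
        have h3 : s * (t * τ) ≤ s * (s * nuclearNorm B) := by nlinarith
        exact le_of_mul_le_mul_left h3 hs0
      have hcontra : s * nuclearNorm B < t * τ := by
        have hs2 : s ≤ (t*τ) / (2*(nuclearNorm B + 1)) := min_le_right _ _
        have htτ : 0 < t * τ := mul_pos htpos hτpos
        have h4 : s * nuclearNorm B ≤ (t*τ) / (2*(nuclearNorm B + 1)) * nuclearNorm B :=
          mul_le_mul_of_nonneg_right hs2 hNB
        have h5 : (t*τ) / (2*(nuclearNorm B + 1)) * nuclearNorm B < t * τ := by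
          rw [div_mul_eq_mul_div, div_lt_iff₀ (by linarith)]
          nlinarith
        linarith
      linarith
    have hC : C = 0 := by
      by_contra hC0
      set τ := ∑ i, ∑ j, C i j ^ 2 with hτdef
      have hτpos : 0 < τ := sum_sq_pos_of_ne_zero hC0
      have hsτ : Real.sqrt τ ≠ 0 := ne_of_gt (Real.sqrt_pos.mpr hτpos)
      have hss2 : Real.sqrt τ * Real.sqrt τ = τ := Real.mul_self_sqrt hτpos.le
      set t := (Real.sqrt τ)⁻¹ with htdef
      have htpos : 0 < t := inv_pos.mpr (Real.sqrt_pos.mpr hτpos)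
      have ht2 : t * t * τ = 1 := by rw [← hss2, htdef]; field_simp
      set s := min (1/2 : ℝ) ((t*τ) / (2*(nuclearNorm B + 1))) with hsdef
      have hs0 : 0 < s :=
        lt_min (by norm_num) (div_pos (mul_pos htpos hτpos) (by linarith))
      have hshalf : s ≤ 1/2 := min_le_left _ _
      set c := Real.sqrt (1 - s*s) with hcdef
      have hc0 : 0 ≤ c := Real.sqrt_nonneg _
      have hc2 : c * c = 1 - s * s := Real.mul_self_sqrt (by nlinarith)
      have hc1 : c ≤ 1 := by nlinarith
      have h1c : 1 - c ≤ s * s := by nlinarith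
      set W : Matrix (Fin m₁ ⊕ Fin m₂) (Fin n₁ ⊕ Fin n₂) ℝ :=
        fromBlocks (c • W₀) ((s*t) • C) 0 0 with hWdef
      have hWWt : W * Wᵀ
          = fromBlocks ((c*c) • (W₀ * W₀ᵀ) + ((s*t)*(s*t)) • (C * Cᵀ)) 0 0 0 := by
        rw [hWdef, fromBlocks_transpose, fromBlocks_multiply]
        simp only [transpose_smul, Matrix.smul_mul, Matrix.mul_smul, smul_smul,
          Matrix.mul_zero, Matrix.zero_mul, add_zero, zero_add, transpose_zero, smul_zero]
      have hG : ((1 : Matrix (Fin m₁) (Fin m₁) ℝ)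
          - (c*c) • (W₀ * W₀ᵀ) - ((s*t)*(s*t)) • (C * Cᵀ)).PosSemidef := by
        refine psd_of_quad ?_ ?_
        · refine sym_of_transpose ?_
          rw [transpose_sub, transpose_sub, transpose_smul, transpose_smul, transpose_one,
            transpose_mul, transpose_mul, transpose_transpose, transpose_transpose]
        · intro x
          have q1 : x ⬝ᵥ (W₀ * W₀ᵀ) *ᵥ x ≤ x ⬝ᵥ x := by
            have h := psd_quad hW₀' x
            rw [sub_mulVec, dotProduct_sub, one_mulVec] at h
            linarith
          have q2 : x ⬝ᵥ (C * Cᵀ) *ᵥ x ≤ τ * (x ⬝ᵥ x) := by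
            have hps := self_mul_transpose_le C
            rw [← hτdef] at hps
            have h := psd_quad hps x
            rw [sub_mulVec, dotProduct_sub, smul_mulVec, one_mulVec,
              dotProduct_smul, smul_eq_mul] at h
            linarith
          have hxx : 0 ≤ x ⬝ᵥ x := dot_self_nonneg x
          rw [sub_mulVec, sub_mulVec, dotProduct_sub, dotProduct_sub, one_mulVec,
            smul_mulVec, smul_mulVec, dotProduct_smul, dotProduct_smul,
            smul_eq_mul, smul_eq_mul]
          have e1 : (c*c) * (x ⬝ᵥ (W₀ * W₀ᵀ) *ᵥ x) ≤ (c*c) * (x ⬝ᵥ x) :=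
            mul_le_mul_of_nonneg_left q1 (mul_self_nonneg c)
          have e2 : ((s*t)*(s*t)) * (x ⬝ᵥ (C * Cᵀ) *ᵥ x)
              ≤ ((s*t)*(s*t)) * (τ * (x ⬝ᵥ x)) :=
            mul_le_mul_of_nonneg_left q2 (mul_self_nonneg (s*t))
          have e3 : ((s*t)*(s*t)) * (τ * (x ⬝ᵥ x)) = (s*s) * (x ⬝ᵥ x) := by
            have : ((s*t)*(s*t)) * (τ * (x ⬝ᵥ x)) = (s*s) * ((t*t*τ) * (x ⬝ᵥ x)) := by ring
            rw [this, ht2, one_mul]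
          nlinarith [e1, e2, e3, hc2, hxx]
      have hWWt' : (1 - W * Wᵀ).PosSemidef := by
        rw [hWWt, ← fromBlocks_one, fromBlocks_sub]
        simp only [sub_zero]
        rw [sub_add_eq_sub_sub]
        exact psd_fromBlocks_diag hG Matrix.PosSemidef.one
      have hW : (1 - Wᵀ * W).PosSemidef := contraction_transfer hWWt'
      have htrW : trace ((Matrix.fromBlocks B C D F)ᵀ * W)
          = c * nuclearNorm B + (s*t) * τ := by
        rw [hWdef, fromBlocks_transpose, fromBlocks_multiply]
        simp only [Matrix.mul_zero, Matrix.zero_mul, add_zero, zero_add, Matrix.mul_smul]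
        rw [trace_fromBlocks, trace_smul, trace_smul, htr₀, trace_transpose_mul_self]
        simp [smul_eq_mul]
        exact Or.inl rfl
      have hle := trace_le_nuclearNorm (Matrix.fromBlocks B C D F) W hW
      rw [htrW, hEq] at hle
      have hkey : t * τ ≤ s * nuclearNorm B := by
        have h1 : s * (t * τ) ≤ (1 - c) * nuclearNorm B := by nlinarith
        have h2 : (1 - c) * nuclearNorm B ≤ (s*s) * nuclearNorm B :=
          mul_le_mul_of_nonneg_right h1c hNB
        have h3 : s * (t * τ) ≤ s * (s * nuclearNorm B) := by nlinarith
        exact le_of_mul_le_mul_left h3 hs0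
      have hcontra : s * nuclearNorm B < t * τ := by
        have hs2 : s ≤ (t*τ) / (2*(nuclearNorm B + 1)) := min_le_right _ _
        have htτ : 0 < t * τ := mul_pos htpos hτpos
        have h4 : s * nuclearNorm B ≤ (t*τ) / (2*(nuclearNorm B + 1)) * nuclearNorm B :=
          mul_le_mul_of_nonneg_right hs2 hNB
        have h5 : (t*τ) / (2*(nuclearNorm B + 1)) * nuclearNorm B < t * τ := by
          rw [div_mul_eq_mul_div, div_lt_iff₀ (by linarith)]
          nlinarith
        linarith
      linarith
    exact ⟨hC, hD, hF⟩
  · -- reverse direction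
    rintro ⟨rfl, rfl, rfl⟩
    refine le_antisymm ?_ (part2 0 0 0)
    obtain ⟨W, hW, htr⟩ := exists_dual (Matrix.fromBlocks B 0 0 (0 : Matrix (Fin m₂) (Fin n₂) ℝ))
    set W11 := W.toBlocks₁₁ with hW11def
    set W12 := W.toBlocks₁₂
    set W21 := W.toBlocks₂₁
    set W22 := W.toBlocks₂₂
    have hWf : W = fromBlocks W11 W12 W21 W22 := (fromBlocks_toBlocks W).symm
    have htrB : trace ((Matrix.fromBlocks B 0 0 (0 : Matrix (Fin m₂) (Fin n₂) ℝ))ᵀ * W)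
        = trace (Bᵀ * W11) := by
      rw [hWf, fromBlocks_transpose, fromBlocks_multiply]
      simp only [Matrix.zero_mul, Matrix.mul_zero, add_zero, zero_add, transpose_zero]
      rw [trace_fromBlocks]
      simp
    have hW11 : (1 - W11ᵀ * W11).PosSemidef := by
      have hblk : (1 - Wᵀ * W).toBlocks₁₁ = 1 - W11ᵀ * W11 - W21ᵀ * W21 := by
        rw [hWf, fromBlocks_transpose, fromBlocks_multiply, ← fromBlocks_one, fromBlocks_sub]
        simp [toBlocks_fromBlocks₁₁]
        abel
      have h1 := psd_toBlocks₁₁ hW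
      rw [hblk] at h1
      have h2 : (W21ᵀ * W21).PosSemidef := Matrix.posSemidef_conjTranspose_mul_self W21
      have := h1.add h2
      simpa using this
    have := trace_le_nuclearNorm B W11 hW11
    rw [htr] at htrB
    rw [← htrB] at this
    exact this
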